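/- Let F be a finite field with |F| = q. (a) For every integer n ≥ 1: 9·q^(n²) < 32·|GL_n(F)| and |GL_n(F)| < q^(n²). (b) For every integer n ≥ 2: 9·q^(n²−1) < 16·|SL_n(F)| and |SL_n(F)| < q^(n²−1). -/

import Mathlib

private lemma aux_prod_lower (r : ℝ) (hr0 : 0 < r) (hr : r ≤ 1/2) (c : ℝ) (hc : 0 < c)
    (m : ℕ) (hm : 1 ≤ m)
    (hbase : c * (1 + r ^ m + (r ^ m) ^ 2) ≤ 1 - r ^ m) :
    ∀ n : ℕ, 1 ≤ n →
      c * (1 + r ^ (n + m - 1) + (r ^ (n + m - 1)) ^ 2)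
        ≤ ∏ j ∈ Finset.range n, (1 - r ^ (j + m)) := by
  intro n hn
  induction n with
  | zero => omega
  | succ k ih =>
    rcases Nat.eq_zero_or_pos k with rfl | hk
    · simpa using hbase
    · have h1 := ih hk
      rw [Finset.prod_range_succ]
      have hkm : k + m - 1 + 1 = k + m := by omega
      set a := r ^ (k + m - 1) with ha
      have har : r ^ (k + m) = a * r := by rw [ha, ← pow_succ, hkm]
      have ha0 : 0 < a := pow_pos hr0 _
      have ha2 : a ≤ 1/2 := by
        calc a = r ^ (k + m - 1) := ha
          _ ≤ r ^ 1 := pow_le_pow_of_le_one hr0.le (by linarith) (by omega)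
          _ = r := pow_one r
          _ ≤ 1/2 := hr
      have hexp : k + 1 + m - 1 = k + m := by omega
      rw [hexp, har]
      have hpos : (0:ℝ) ≤ 1 - a * r := by nlinarith
      have har14 : a * r ≤ 1/4 := by nlinarith
      have h5 : 2 * (a * r) ≤ a := by nlinarith
      have h6 : a ^ 2 * r ≤ a ^ 2 / 2 := by nlinarith [sq_nonneg a]
      have h7 : a ^ 2 * (a * r) ≤ a ^ 2 / 4 := by nlinarith [sq_nonneg a]
      have h8 : a ^ 2 * (r * r) ≤ a ^ 2 / 4 := by nlinarith [sq_nonneg a, sq_nonneg r]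
      have key0 : 1 + a * r + (a * r) ^ 2 ≤ (1 + a + a ^ 2) * (1 - a * r) := by nlinarith
      have key : c * (1 + a * r + (a * r) ^ 2) ≤ (c * (1 + a + a ^ 2)) * (1 - a * r) := by
        rw [mul_assoc]
        exact mul_le_mul_of_nonneg_left key0 hc.le
      exact key.trans (mul_le_mul_of_nonneg_right h1 hpos)

private lemma aux_cast (q : ℕ) (hq : 1 ≤ q) (n : ℕ) :
    ((∏ i ∈ Finset.range n, (q ^ n - q ^ i) : ℕ) : ℝ)
      = (q : ℝ) ^ (n ^ 2) * ∏ j ∈ Finset.range n, (1 - ((q : ℝ)⁻¹) ^ (j + 1)) := by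
  have hq0 : (0 : ℝ) < q := by exact_mod_cast hq
  rw [Nat.cast_prod]
  have h1 : ∀ i ∈ Finset.range n, ((q ^ n - q ^ i : ℕ) : ℝ) = (q : ℝ) ^ n - (q : ℝ) ^ i := by
    intro i hi
    have h : q ^ i ≤ q ^ n := Nat.pow_le_pow_right hq (Finset.mem_range.mp hi).le
    push_cast [Nat.cast_sub h]
    ring
  rw [Finset.prod_congr rfl h1,
    ← Finset.prod_range_reflect (fun i => (q : ℝ) ^ n - (q : ℝ) ^ i) n]
  have h2 : ∀ j ∈ Finset.range n,
      (q : ℝ) ^ n - (q : ℝ) ^ (n - 1 - j) = (q : ℝ) ^ n * (1 - ((q : ℝ)⁻¹) ^ (j + 1)) := by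
    intro j hj
    have hj' : j < n := Finset.mem_range.mp hj
    have hmul : (q : ℝ) ^ (n - 1 - j) * (q : ℝ) ^ (j + 1) = (q : ℝ) ^ n := by
      rw [← pow_add]
      congr 1
      omega
    have hne : ((q : ℝ) ^ (j + 1)) ≠ 0 := by positivity
    rw [mul_sub, mul_one, inv_pow]
    congr 1
    field_simp
    linarith [hmul]
  rw [Finset.prod_congr rfl h2, Finset.prod_mul_distrib, Finset.prod_const, ← pow_mul, sq]
  simp [Finset.card_range]

private lemma aux_card_SL {F : Type*} [Field F] [Fintype F] (n : ℕ) (hn : 1 ≤ n) :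
    Nat.card (Matrix.GeneralLinearGroup (Fin n) F)
      = (Fintype.card F - 1) * Nat.card (Matrix.SpecialLinearGroup (Fin n) F) := by
  classical
  have hsurj : Function.Surjective
      (Matrix.GeneralLinearGroup.det : GL (Fin n) F →* Fˣ) := by
    intro u
    have h0 : 0 < n := hn
    set i0 : Fin n := ⟨0, h0⟩
    set d : Fin n → F := Function.update (fun _ => (1 : F)) i0 (u : F) with hd
    have hdet : (Matrix.diagonal d).det = (u : F) := by
      rw [Matrix.det_diagonal, hd, Finset.prod_update_of_mem (Finset.mem_univ i0)]
      simp
    refine ⟨Matrix.GeneralLinearGroup.mk'' (Matrix.diagonal d)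
      (by rw [hdet]; exact u.isUnit), ?_⟩
    apply Units.ext
    exact hdet
  let e2 := QuotientGroup.quotientKerEquivOfSurjective _ hsurj
  let e3 : Matrix.SpecialLinearGroup (Fin n) F ≃
      (Matrix.GeneralLinearGroup.det : GL (Fin n) F →* Fˣ).ker :=
    { toFun := fun A => ⟨Matrix.SpecialLinearGroup.toGL A,
        MonoidHom.mem_ker.mpr (Matrix.SpecialLinearGroup.coeToGL_det A)⟩
      invFun := fun B => ⟨((B : GL (Fin n) F) : Matrix (Fin n) (Fin n) F), by
        have h := MonoidHom.mem_ker.mp B.2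
        exact congrArg Units.val h⟩
      left_inv := fun A => Subtype.ext rfl
      right_inv := fun B => Subtype.ext (Units.ext rfl) }
  calc Nat.card (Matrix.GeneralLinearGroup (Fin n) F)
      = Nat.card (GL (Fin n) F ⧸ (Matrix.GeneralLinearGroup.det :
          GL (Fin n) F →* Fˣ).ker) * Nat.card (Matrix.GeneralLinearGroup.det :
          GL (Fin n) F →* Fˣ).ker :=
        Subgroup.card_eq_card_quotient_mul_card_subgroup _
    _ = Nat.card Fˣ * Nat.card (Matrix.SpecialLinearGroup (Fin n) F) := by
        rw [Nat.card_congr e2.toEquiv, Nat.card_congr e3.symm]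
    _ = (Fintype.card F - 1) * Nat.card (Matrix.SpecialLinearGroup (Fin n) F) := by
        rw [Nat.card_units, Nat.card_eq_fintype_card]

/-- Lemma 5.11 (order estimates for linear groups): for a finite field `F` with `q`
elements, `9·q^{n²}/32 < |GL_n(F)| < q^{n²}` for `n ≥ 1`, and
`9·q^{n²−1}/16 < |SL_n(F)| < q^{n²−1}` for `n ≥ 2`. -/
theorem order_linear_groups {F : Type*} [Field F] [Fintype F] (q : ℕ)
    (hq : Fintype.card F = q) :
    (∀ n : ℕ, 1 ≤ n →
      9 * q ^ (n ^ 2) < 32 * Nat.card (Matrix.GeneralLinearGroup (Fin n) F) ∧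
        Nat.card (Matrix.GeneralLinearGroup (Fin n) F) < q ^ (n ^ 2)) ∧
    (∀ n : ℕ, 2 ≤ n →
      9 * q ^ (n ^ 2 - 1) < 16 * Nat.card (Matrix.SpecialLinearGroup (Fin n) F) ∧
        Nat.card (Matrix.SpecialLinearGroup (Fin n) F) < q ^ (n ^ 2 - 1)) := by
  have hq2 : 2 ≤ q := by
    rw [← hq]
    exact Fintype.one_lt_card
  have hq1 : 1 ≤ q := by omega
  have hQ2 : (2 : ℝ) ≤ (q : ℝ) := by exact_mod_cast hq2
  have hQ0 : (0 : ℝ) < (q : ℝ) := by linarith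
  set r : ℝ := ((q : ℝ))⁻¹ with hrdef
  have hr0 : 0 < r := by positivity
  have hr : r ≤ 1/2 := by
    rw [hrdef]
    rw [show (1:ℝ)/2 = (2:ℝ)⁻¹ by norm_num]
    exact inv_anti₀ (by norm_num) hQ2
  have card_GL : ∀ n : ℕ, Nat.card (Matrix.GeneralLinearGroup (Fin n) F)
      = ∏ i ∈ Finset.range n, (q ^ n - q ^ i) := by
    intro n
    rw [Matrix.card_GL_field, hq]
    exact Fin.prod_univ_eq_prod_range (fun i => q ^ n - q ^ i) n
  -- upper bound for the GL product
  have prod_upper : ∀ n : ℕ, 1 ≤ n →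
      ∏ i ∈ Finset.range n, (q ^ n - q ^ i) < (q ^ n) ^ n := by
    intro n hn
    have h : ∏ i ∈ Finset.range n, (q ^ n - q ^ i) < ∏ _i ∈ Finset.range n, q ^ n := by
      apply Finset.prod_lt_prod_of_nonempty
      · intro i hi
        have : q ^ i < q ^ n := Nat.pow_lt_pow_right hq2 (Finset.mem_range.mp hi)
        omega
      · intro i hi
        have h1 : 0 < q ^ i := Nat.pow_pos (by omega)
        exact Nat.sub_lt (Nat.pow_pos (by omega)) h1
      · exact Finset.nonempty_range_iff.mpr (by omega)
    simpa [Finset.prod_const, Finset.card_range] using h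
  -- lower bound for the partial products
  have lower1 : ∀ n : ℕ, 1 ≤ n →
      (9/32 : ℝ) < ∏ j ∈ Finset.range n, (1 - r ^ (j + 1)) := by
    intro n hn
    have hbase : (9/32 : ℝ) * (1 + r ^ 1 + (r ^ 1) ^ 2) ≤ 1 - r ^ 1 := by
      rw [pow_one]
      nlinarith
    have h := aux_prod_lower r hr0 hr (9/32) (by norm_num) 1 le_rfl hbase n hn
    have hx : 0 < r ^ (n + 1 - 1) := pow_pos hr0 _
    nlinarith [sq_nonneg (r ^ (n + 1 - 1))]
  have lower2 : ∀ n : ℕ, 1 ≤ n →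
      (9/16 : ℝ) < ∏ j ∈ Finset.range n, (1 - r ^ (j + 2)) := by
    intro n hn
    have hbase : (9/16 : ℝ) * (1 + r ^ 2 + (r ^ 2) ^ 2) ≤ 1 - r ^ 2 := by
      have hr2 : r ^ 2 ≤ 1/4 := by nlinarith
      have hr4 : (r ^ 2) ^ 2 ≤ 1/16 := by nlinarith [pow_pos hr0 2]
      have hr20 : 0 < r ^ 2 := pow_pos hr0 2
      nlinarith
    have h := aux_prod_lower r hr0 hr (9/16) (by norm_num) 2 (by omega) hbase n hn
    have hx : 0 < r ^ (n + 2 - 1) := pow_pos hr0 _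
    nlinarith [sq_nonneg (r ^ (n + 2 - 1))]
  constructor
  · -- GL bounds
    intro n hn
    constructor
    · have hR : (9 : ℝ) * (q : ℝ) ^ (n ^ 2)
          < 32 * ((Nat.card (Matrix.GeneralLinearGroup (Fin n) F) : ℕ) : ℝ) := by
        rw [card_GL n, aux_cast q hq1 n]
        have hP := lower1 n hn
        have hpow : (0 : ℝ) < (q : ℝ) ^ (n ^ 2) := by positivity
        nlinarith
      exact_mod_cast hR
    · rw [card_GL n]
      calc ∏ i ∈ Finset.range n, (q ^ n - q ^ i) < (q ^ n) ^ n := prod_upper n hn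
        _ = q ^ (n ^ 2) := by rw [← pow_mul, sq]
  · -- SL bounds
    intro n hn
    obtain ⟨m, rfl⟩ : ∃ m, n = m + 2 := ⟨n - 2, by omega⟩
    set n := m + 2
    have hn1 : 1 ≤ n := by omega
    have hcard := aux_card_SL (F := F) n hn1
    rw [hq] at hcard
    have hq1' : 0 < q - 1 := by omega
    have hexp : n ^ 2 - 1 = (m + 1) + (n * (m + 1)) := by
      have h1 : n ^ 2 = (m + 1) + (n * (m + 1)) + 1 := by simp only [n]; ring
      omega
    constructor
    · -- lower bound
      have key : 9 * q ^ (n ^ 2 - 1) * (q - 1) < 16 * Nat.card (Matrix.GeneralLinearGroup (Fin n) F) := by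
        have hR : (9 : ℝ) * (q : ℝ) ^ (n ^ 2 - 1) * ((q : ℝ) - 1)
            < 16 * ((Nat.card (Matrix.GeneralLinearGroup (Fin n) F) : ℕ) : ℝ) := by
          rw [card_GL n, aux_cast q hq1 n]
          have hsplit : ∏ j ∈ Finset.range n, (1 - r ^ (j + 1))
              = (∏ j ∈ Finset.range (m + 1), (1 - r ^ (j + 2))) * (1 - r) := by
            rw [show n = (m + 1) + 1 from rfl, Finset.prod_range_succ']
            norm_num
          rw [hsplit]
          have hP := lower2 (m + 1) (by omega)
          have hQn : (q : ℝ) ^ (n ^ 2) = (q : ℝ) ^ (n ^ 2 - 1) * (q : ℝ) := by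
            have h1 : 1 ≤ n ^ 2 := Nat.one_le_pow _ _ (by omega)
            have h : n ^ 2 - 1 + 1 = n ^ 2 := by omega
            conv_lhs => rw [← h, pow_succ]
          have hfact : (q : ℝ) * (1 - r) = (q : ℝ) - 1 := by
            rw [hrdef]
            field_simp
          have hpow : (0 : ℝ) < (q : ℝ) ^ (n ^ 2 - 1) := by positivity
          have hQ1 : (0 : ℝ) < (q : ℝ) - 1 := by linarith
          have hpos3 : (0 : ℝ) < 16 * ((q : ℝ) ^ (n ^ 2 - 1) * ((q : ℝ) - 1)) := by positivity
          calc (9 : ℝ) * (q : ℝ) ^ (n ^ 2 - 1) * ((q : ℝ) - 1)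
              = (16 * ((q : ℝ) ^ (n ^ 2 - 1) * ((q : ℝ) - 1))) * (9/16) := by ring
            _ < 16 * ((q : ℝ) ^ (n ^ 2 - 1) * ((q : ℝ) - 1))
                  * ∏ j ∈ Finset.range (m + 1), (1 - r ^ (j + 2)) :=
                mul_lt_mul_of_pos_left hP hpos3
            _ = (q : ℝ) ^ (n ^ 2)
                  * ((∏ j ∈ Finset.range (m + 1), (1 - r ^ (j + 2))) * (1 - r)) * 16 := by
                rw [hQn, ← hfact]; ring
            _ = 16 * ((q : ℝ) ^ (n ^ 2)
                  * ((∏ j ∈ Finset.range (m + 1), (1 - r ^ (j + 2))) * (1 - r))) := by ring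
        have := hR
        push_cast [Nat.cast_sub hq1] at this
        exact_mod_cast this
      rw [hcard] at key
      have key2 : (9 * q ^ (n ^ 2 - 1)) * (q - 1) < (16 * Nat.card (Matrix.SpecialLinearGroup (Fin n) F)) * (q - 1) := by
        calc (9 * q ^ (n ^ 2 - 1)) * (q - 1) < 16 * ((q - 1) * Nat.card (Matrix.SpecialLinearGroup (Fin n) F)) := key
          _ = (16 * Nat.card (Matrix.SpecialLinearGroup (Fin n) F)) * (q - 1) := by ring
      exact Nat.lt_of_mul_lt_mul_right key2
    · -- upper bound
      have hGLlt : Nat.card (Matrix.GeneralLinearGroup (Fin n) F) < (q - 1) * q ^ (n ^ 2 - 1) := by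
        rw [card_GL n]
        have hstep : ∏ i ∈ Finset.range n, (q ^ n - q ^ i)
            = (∏ i ∈ Finset.range (m + 1), (q ^ n - q ^ i)) * (q ^ n - q ^ (m + 1)) := by
          rw [show n = (m + 1) + 1 from rfl, Finset.prod_range_succ]
        have hlast : q ^ n - q ^ (m + 1) = q ^ (m + 1) * (q - 1) := by
          obtain ⟨p, rfl⟩ : ∃ p, q = p + 1 := ⟨q - 1, by omega⟩
          simp only [Nat.add_sub_cancel]
          have h1 : (p + 1) ^ n = (p + 1) ^ (m + 1) * (p + 1) := by rw [← pow_succ]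
          have h2 : (p + 1) ^ (m + 1) * (p + 1)
              = (p + 1) ^ (m + 1) * p + (p + 1) ^ (m + 1) := by ring
          omega
        have hhead : ∏ i ∈ Finset.range (m + 1), (q ^ n - q ^ i) < (q ^ n) ^ (m + 1) := by
          have h : ∏ i ∈ Finset.range (m + 1), (q ^ n - q ^ i)
              < ∏ _i ∈ Finset.range (m + 1), q ^ n := by
            apply Finset.prod_lt_prod_of_nonempty
            · intro i hi
              have hi' : i < m + 1 := Finset.mem_range.mp hi
              have : q ^ i < q ^ n := Nat.pow_lt_pow_right hq2 (by omega)
              omega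
            · intro i hi
              have h1 : 0 < q ^ i := Nat.pow_pos (by omega)
              exact Nat.sub_lt (Nat.pow_pos (by omega)) h1
            · exact Finset.nonempty_range_iff.mpr (by omega)
          simpa [Finset.prod_const, Finset.card_range] using h
        calc ∏ i ∈ Finset.range n, (q ^ n - q ^ i)
            = (∏ i ∈ Finset.range (m + 1), (q ^ n - q ^ i)) * (q ^ n - q ^ (m + 1)) := hstep
          _ < (q ^ n) ^ (m + 1) * (q ^ n - q ^ (m + 1)) := by
              have hkpos : 0 < q ^ n - q ^ (m + 1) := by
                have h1 : 0 < q ^ (m + 1) := Nat.pow_pos (by omega)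
                have : q ^ (m + 1) < q ^ n := Nat.pow_lt_pow_right hq2 (by omega)
                omega
              exact (Nat.mul_lt_mul_right hkpos).mpr hhead
          _ = (q - 1) * q ^ (n ^ 2 - 1) := by
              rw [hlast, hexp, ← pow_mul, pow_add]
              ring
      rw [hcard] at hGLlt
      exact Nat.lt_of_mul_lt_mul_left hGLlt
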